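/- Determinant factorization through cyclic reduction: for a block tridiagonal matrix A with invertible even diagonal blocks, det(A) = (∏_{j even} det D_j) · det(S), where S is the Schur complement of the even blocks in the red/black permuted matrix P A P^T. -/

import Mathlib

open Matrix

set_option maxHeartbeats 1000000 in
/-- Determinant factorization through cyclic reduction: for a block
tridiagonal matrix `A` with invertible even-indexed diagonal blocks,
`det A = (∏_{j even} det D_j) · det S`, where `S` is the Schur complement of
the even blocks in the red/black permuted matrix. -/
theorem det_factorization_cyclic_reduction
    (m s : ℕ) (D E F : ℕ → Matrix (Fin s) (Fin s) ℝ)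
    (hE0 : E 0 = 0) (hEtop : ∀ j, 2 * m ≤ j → E j = 0)
    (hFtop : ∀ j, 2 * m - 1 ≤ j → F j = 0)
    (hD : ∀ i : Fin m, IsUnit (D (2 * (i : ℕ))))
    (A : Matrix (Fin (2 * m) × Fin s) (Fin (2 * m) × Fin s) ℝ)
    (hA : A = fun p q =>
      if p.1 = q.1 then D (p.1 : ℕ) p.2 q.2
      else if (p.1 : ℕ) = (q.1 : ℕ) + 1 then E (p.1 : ℕ) p.2 q.2
      else if (q.1 : ℕ) = (p.1 : ℕ) + 1 then F (p.1 : ℕ) p.2 q.2 else 0)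
    (A11 A12 A21 A22 : Matrix (Fin m × Fin s) (Fin m × Fin s) ℝ)
    (hA11 : A11 = fun p q => if p.1 = q.1 then D (2 * (p.1 : ℕ)) p.2 q.2 else 0)
    (hA12 : A12 = fun p q =>
      if p.1 = q.1 then F (2 * (p.1 : ℕ)) p.2 q.2
      else if (p.1 : ℕ) = (q.1 : ℕ) + 1 then E (2 * (p.1 : ℕ)) p.2 q.2 else 0)
    (hA21 : A21 = fun p q =>
      if p.1 = q.1 then E (2 * (p.1 : ℕ) + 1) p.2 q.2
      else if (q.1 : ℕ) = (p.1 : ℕ) + 1 then F (2 * (p.1 : ℕ) + 1) p.2 q.2 else 0)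
    (hA22 : A22 = fun p q => if p.1 = q.1 then D (2 * (p.1 : ℕ) + 1) p.2 q.2 else 0) :
    A.det = (∏ i : Fin m, (D (2 * (i : ℕ))).det) *
      (A22 - A21 * A11⁻¹ * A12).det := by
  -- the red/black map
  set f : Fin m ⊕ Fin m → Fin (2 * m) :=
    Sum.elim (fun i => ⟨2 * i, by have := i.isLt; omega⟩)
      (fun i => ⟨2 * i + 1, by have := i.isLt; omega⟩) with hf
  have hinj : Function.Injective f := by
    intro a b hab
    cases a <;> cases b <;> simp [hf, Fin.ext_iff] at hab ⊢ <;> omega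
  have hbij : Function.Bijective f :=
    (Fintype.bijective_iff_injective_and_card f).mpr ⟨hinj, by simp; ring⟩
  set e : Fin m ⊕ Fin m ≃ Fin (2 * m) := Equiv.ofBijective f hbij with he
  set Eq : ((Fin m × Fin s) ⊕ (Fin m × Fin s)) ≃ (Fin (2 * m) × Fin s) :=
    (Equiv.sumProdDistrib (Fin m) (Fin m) (Fin s)).symm.trans
      (e.prodCongr (Equiv.refl (Fin s))) with hEq
  have hEql : ∀ (i : Fin m) (x : Fin s),
      Eq (Sum.inl (i, x)) = (⟨2 * i, by have := i.isLt; omega⟩, x) := by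
    intro i x; rfl
  have hEqr : ∀ (i : Fin m) (x : Fin s),
      Eq (Sum.inr (i, x)) = (⟨2 * i + 1, by have := i.isLt; omega⟩, x) := by
    intro i x; rfl
  have hsub : A.submatrix Eq Eq = fromBlocks A11 A12 A21 A22 := by
    ext p q
    rcases p with (⟨i, x⟩ | ⟨i, x⟩) <;> rcases q with (⟨j, y⟩ | ⟨j, y⟩)
    · rw [Matrix.submatrix_apply, hEql, hEql, hA, fromBlocks_apply₁₁, hA11]
      simp only [fromBlocks_apply₁₁, Fin.mk.injEq, Fin.ext_iff]
      split_ifs <;> first | rfl | omega | (congr 1; omega)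
    · rw [Matrix.submatrix_apply, hEql, hEqr, hA, fromBlocks_apply₁₂, hA12]
      simp only [fromBlocks_apply₁₂, Fin.mk.injEq, Fin.ext_iff]
      split_ifs <;> first | rfl | omega | (congr 1; omega)
    · rw [Matrix.submatrix_apply, hEqr, hEql, hA, fromBlocks_apply₂₁, hA21]
      simp only [fromBlocks_apply₂₁, Fin.mk.injEq, Fin.ext_iff]
      split_ifs <;> first | rfl | omega | (congr 1; omega)
    · rw [Matrix.submatrix_apply, hEqr, hEqr, hA, fromBlocks_apply₂₂, hA22]
      simp only [fromBlocks_apply₂₂, Fin.mk.injEq, Fin.ext_iff]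
      split_ifs <;> first | rfl | omega | (congr 1; omega)
  have hA11det : A11.det = ∏ i : Fin m, (D (2 * (i : ℕ))).det := by
    have : A11 = (Matrix.blockDiagonal (fun k : Fin m => D (2 * (k : ℕ)))).submatrix
        (Equiv.prodComm (Fin m) (Fin s)) (Equiv.prodComm (Fin m) (Fin s)) := by
      ext p q
      rcases p with ⟨i, x⟩; rcases q with ⟨j, y⟩
      simp only [hA11, Matrix.submatrix_apply, Equiv.coe_prodComm, Prod.swap_prod_mk,
        Matrix.blockDiagonal_apply]
    rw [this, Matrix.det_submatrix_equiv_self, Matrix.det_blockDiagonal]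
  have hA11unit : IsUnit A11 := by
    rw [Matrix.isUnit_iff_isUnit_det, hA11det]
    simp only [isUnit_iff_ne_zero, Finset.prod_ne_zero_iff]
    intro i _
    exact isUnit_iff_ne_zero.mp ((Matrix.isUnit_iff_isUnit_det _).mp (hD i))
  haveI := hA11unit.invertible
  rw [← Matrix.det_submatrix_equiv_self Eq A, hsub, Matrix.det_fromBlocks₁₁, hA11det,
    Matrix.invOf_eq_nonsing_inv]
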